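/- Let p be a prime and let G = Z_p ⊕ Z_{p²}. The number of automorphisms of G whose set of fixed points has exactly p elements is p(2p³ - 4p² + 1). -/

import Mathlib

namespace ThetaAux
set_option linter.unusedSectionVars false

variable (p : ℕ) [hp : Fact p.Prime]

instance : NeZero p := ⟨hp.out.ne_zero⟩
instance : NeZero (p^2) := ⟨pow_ne_zero 2 hp.out.ne_zero⟩

/-- reduction mod p -/
def phi : ZMod (p^2) →+* ZMod p := ZMod.castHom (dvd_pow_self p two_ne_zero) (ZMod p)

/-- set-theoretic lift -/
def iot (v : ZMod p) : ZMod (p^2) := (v.val : ZMod (p^2))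

def muF (t : ZMod p) : ZMod (p^2) := (p : ZMod (p^2)) * iot p t

variable {p}

lemma val_iot (v : ZMod p) : (iot p v).val = v.val := by
  apply ZMod.val_cast_of_lt
  exact lt_of_lt_of_le (ZMod.val_lt v) (Nat.le_self_pow two_ne_zero p)

lemma phi_iot (v : ZMod p) : phi p (iot p v) = v := by
  simp [phi, iot, ZMod.natCast_val, ZMod.cast_id]

lemma phi_natCast (a : ℕ) : phi p (a : ZMod (p^2)) = (a : ZMod p) := by
  simp [phi]

lemma phi_muF (t : ZMod p) : phi p (muF p t) = 0 := by
  simp [muF, phi_natCast (p := p) p, ZMod.natCast_self, phi_iot]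

lemma val_muF (t : ZMod p) : (muF p t).val = p * t.val := by
  have h : (muF p t) = ((p * t.val : ℕ) : ZMod (p^2)) := by
    rw [muF, iot]; push_cast; ring
  rw [h, ZMod.val_cast_of_lt]
  have ht := ZMod.val_lt t
  have hpp : p * t.val < p * p := by
    exact Nat.mul_lt_mul_of_le_of_lt (le_refl p) ht (Nat.pos_of_ne_zero hp.out.ne_zero)
  calc p * t.val < p * p := hpp
  _ = p ^ 2 := by ring

lemma muF_injective : Function.Injective (muF p) := by
  intro a b h
  have : p * a.val = p * b.val := by rw [← val_muF, ← val_muF, h]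
  have := Nat.eq_of_mul_eq_mul_left (Nat.pos_of_ne_zero hp.out.ne_zero) this
  exact ZMod.val_injective _ this

lemma natCast_sq_self : ((p : ZMod (p^2)) * p) = 0 := by
  have : ((p^2 : ℕ) : ZMod (p^2)) = 0 := ZMod.natCast_self _
  push_cast at this
  linear_combination this

lemma phi_eq_zero_iff_exists (x : ZMod (p^2)) : phi p x = 0 ↔ ∃ t, x = muF p t := by
  constructor
  · intro h
    have hdvd : p ∣ x.val := by
      have : ((x.val : ℕ) : ZMod p) = 0 := by
        rw [← phi_natCast, ZMod.natCast_val, ZMod.cast_id, h]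
      exact (ZMod.natCast_eq_zero_iff _ _).mp this
    obtain ⟨k, hk⟩ := hdvd
    have hklt : k < p := by
      have := ZMod.val_lt x
      rw [hk, pow_two] at *
      nlinarith [Nat.pos_of_ne_zero (hp.out.ne_zero)]
    refine ⟨(k : ZMod p), ?_⟩
    have : x = ((x.val : ℕ) : ZMod (p^2)) := by
      rw [ZMod.natCast_val, ZMod.cast_id]
    rw [this, hk]
    have hkval : ((k : ZMod p)).val = k := ZMod.val_cast_of_lt hklt
    rw [muF, iot, hkval]
    push_cast; ring
  · rintro ⟨t, rfl⟩; exact phi_muF t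

lemma p_mul_eq_zero_of_phi_eq_zero {x : ZMod (p^2)} (h : phi p x = 0) :
    (p : ZMod (p^2)) * x = 0 := by
  obtain ⟨t, rfl⟩ := (phi_eq_zero_iff_exists x).mp h
  rw [muF, ← mul_assoc, natCast_sq_self, zero_mul]

lemma p_mul_congr {u v : ZMod (p^2)} (h : phi p u = phi p v) :
    (p : ZMod (p^2)) * u = (p : ZMod (p^2)) * v := by
  have : phi p (u - v) = 0 := by rw [map_sub, h, sub_self]
  have := p_mul_eq_zero_of_phi_eq_zero this
  rw [mul_sub] at this
  linear_combination this


lemma muF_add (s t : ZMod p) : muF p (s + t) = muF p s + muF p t := by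
  have h : phi p (iot p (s+t)) = phi p (iot p s + iot p t) := by
    rw [map_add, phi_iot, phi_iot, phi_iot]
  have := p_mul_congr h
  rw [mul_add] at this
  simpa [muF] using this

/-- μ as an additive hom -/
def mu : ZMod p →+ ZMod (p^2) where
  toFun := muF p
  map_zero' := by simp [muF, iot]
  map_add' := muF_add

lemma mu_apply (t : ZMod p) : (mu : ZMod p →+ ZMod (p^2)) t = muF p t := rfl

lemma mu_mul_eq (t : ZMod p) (y : ZMod (p^2)) :
    muF p t * y = muF p (t * phi p y) := by
  have h : phi p (iot p t * y) = phi p (iot p (t * phi p y)) := by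
    rw [map_mul, phi_iot, phi_iot]
  have := p_mul_congr h
  rw [muF, muF, mul_assoc, this]

lemma mu_mul_mu (s t : ZMod p) : muF p s * muF p t = 0 := by
  rw [mu_mul_eq, phi_muF, mul_zero]
  simp [muF, iot]

lemma muF_eq_zero_iff (t : ZMod p) : muF p t = 0 ↔ t = 0 := by
  constructor
  · intro h
    have : muF p t = muF p 0 := by simpa [muF, iot] using h
    exact muF_injective this
  · rintro rfl; simp [muF, iot]

lemma isUnit_iff_phi_ne_zero (d : ZMod (p^2)) : IsUnit d ↔ phi p d ≠ 0 := by
  constructor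
  · intro h h0
    have := h.map (phi p)
    rw [h0] at this
    exact this.ne_zero rfl
  · intro h
    have hd : d = ((d.val : ℕ) : ZMod (p^2)) := by rw [ZMod.natCast_val, ZMod.cast_id]
    rw [hd]
    rw [ZMod.isUnit_iff_coprime]
    have hnd : ¬ (p ∣ d.val) := by
      intro hdvd
      apply h
      have : ((d.val : ℕ) : ZMod p) = 0 := (ZMod.natCast_eq_zero_iff _ _).mpr hdvd
      rw [← phi_natCast (p := p) d.val, hd] at this
      simpa using this
    have : Nat.Coprime d.val p := ((Nat.Prime.coprime_iff_not_dvd hp.out).mpr hnd).symm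
    exact Nat.Coprime.pow_right 2 this

variable (p) in
/-- extract the digit: ε (μ t) = t -/
def eps (y : ZMod (p^2)) : ZMod p := ((y.val / p : ℕ) : ZMod p)

lemma eps_muF (t : ZMod p) : eps p (muF p t) = t := by
  rw [eps, val_muF, Nat.mul_div_cancel_left _ (Nat.pos_of_ne_zero hp.out.ne_zero)]
  rw [ZMod.natCast_val, ZMod.cast_id]

lemma muF_eps {y : ZMod (p^2)} (h : phi p y = 0) : muF p (eps p y) = y := by
  obtain ⟨t, rfl⟩ := (phi_eq_zero_iff_exists y).mp h
  rw [eps_muF]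

lemma muF_eq_natCast (t : ZMod p) : muF p t = ((p * t.val : ℕ) : ZMod (p^2)) := by
  rw [muF, iot]; push_cast; ring

lemma phi_eq_natCast (d : ZMod (p^2)) : phi p d = ((d.val : ℕ) : ZMod p) := by
  rw [← phi_natCast, ZMod.natCast_val, ZMod.cast_id]

lemma val_phi (d : ZMod (p^2)) : (phi p d).val = d.val % p := by
  rw [phi_eq_natCast, ZMod.val_natCast]

lemma val_eps (d : ZMod (p^2)) : (eps p d).val = d.val / p := by
  rw [eps, ZMod.val_natCast, Nat.mod_eq_of_lt]
  apply Nat.div_lt_of_lt_mul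
  have := ZMod.val_lt d
  calc d.val < p ^ 2 := this
  _ = p * p := by ring

variable (p) in
/-- digit decomposition -/
def Dig : ZMod (p^2) ≃ ZMod p × ZMod p where
  toFun d := (phi p d, eps p d)
  invFun x := iot p x.1 + muF p x.2
  left_inv d := by
    show iot p (phi p d) + muF p (eps p d) = d
    rw [iot, val_phi, muF_eq_natCast, val_eps, ← Nat.cast_add, Nat.mod_add_div,
      ZMod.natCast_val, ZMod.cast_id]
  right_inv x := by
    obtain ⟨v, s⟩ := x
    show (phi p (iot p v + muF p s), eps p (iot p v + muF p s)) = (v, s)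
    have h1 : phi p (iot p v + muF p s) = v := by rw [map_add, phi_iot, phi_muF, add_zero]
    have hval : (iot p v + muF p s).val = v.val + p * s.val := by
      have heq : iot p v + muF p s = ((v.val + p * s.val : ℕ) : ZMod (p^2)) := by
        rw [iot, muF_eq_natCast]; push_cast; ring
      rw [heq, ZMod.val_cast_of_lt]
      have hv := ZMod.val_lt v
      have hs := ZMod.val_lt s
      have hp0 := Nat.pos_of_ne_zero hp.out.ne_zero
      have h2 : p * s.val ≤ p * (p-1) := Nat.mul_le_mul_left p (by omega)
      have h3 : p * (p - 1) = p * p - p := by rw [Nat.mul_sub, Nat.mul_one]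
      have h4 : p ≤ p * p := Nat.le_mul_of_pos_left p hp0
      have h5 : p ^ 2 = p * p := by ring
      omega
    have h2 : eps p (iot p v + muF p s) = s := by
      have := val_eps (iot p v + muF p s)
      rw [hval] at this
      have hv := ZMod.val_lt v
      rw [eps, hval, Nat.add_mul_div_left _ _ (Nat.pos_of_ne_zero hp.out.ne_zero),
        Nat.div_eq_of_lt hv, zero_add, ZMod.natCast_val, ZMod.cast_id]
    rw [h1, h2]

lemma Dig_symm_apply (v s : ZMod p) : (Dig p).symm (v, s) = iot p v + muF p s := rfl
lemma Dig_apply (d : ZMod (p^2)) : Dig p d = (phi p d, eps p d) := rfl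

variable (p) in
/-- the endomorphism with matrix (a b; pc d) -/
def fq (a b c : ZMod p) (d : ZMod (p^2)) : (ZMod p × ZMod (p^2)) →+ (ZMod p × ZMod (p^2)) where
  toFun g := (a * g.1 + b * phi p g.2, muF p (c * g.1) + d * g.2)
  map_zero' := by simp [muF, iot]
  map_add' := by
    intro g h
    have hmu := muF_add (p := p) (c * g.1) (c * h.1)
    have : c * (g.1 + h.1) = c * g.1 + c * h.1 := by ring
    ext
    · show a * (g.1 + h.1) + b * phi p (g.2 + h.2) = _
      rw [map_add]; show _ = (a * g.1 + b * phi p g.2) + (a * h.1 + b * phi p h.2); ring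
    · show muF p (c * (g.1+h.1)) + d * (g.2 + h.2) = _
      rw [this, hmu]
      show _ = (muF p (c * g.1) + d * g.2) + (muF p (c * h.1) + d * h.2); ring

lemma fq_apply (a b c : ZMod p) (d : ZMod (p^2)) (g : ZMod p × ZMod (p^2)) :
    fq p a b c d g = (a * g.1 + b * phi p g.2, muF p (c * g.1) + d * g.2) := rfl

lemma muF_zero : muF p 0 = 0 := by simp [muF, iot, ZMod.val_zero]

lemma fq_e1 (a b c : ZMod p) (d : ZMod (p^2)) :
    fq p a b c d (1, 0) = (a, muF p c) := by
  rw [fq_apply]; simp [muF_zero]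

lemma fq_e2 (a b c : ZMod p) (d : ZMod (p^2)) :
    fq p a b c d (0, 1) = (b, d) := by
  rw [fq_apply]; simp [muF_zero]

lemma hom_eval (f : (ZMod p × ZMod (p^2)) →+ (ZMod p × ZMod (p^2))) (x : ZMod p)
    (y : ZMod (p^2)) : f (x, y) = x.val • f (1, 0) + y.val • f (0, 1) := by
  have h : ((x, y) : ZMod p × ZMod (p^2)) = x.val • ((1 : ZMod p), (0 : ZMod (p^2)))
      + y.val • ((0 : ZMod p), (1 : ZMod (p^2))) := by
    ext
    · show x = x.val • (1 : ZMod p) + y.val • (0 : ZMod p)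
      simp [nsmul_eq_mul, ZMod.natCast_val, ZMod.cast_id]
    · show y = x.val • (0 : ZMod (p^2)) + y.val • (1 : ZMod (p^2))
      simp [nsmul_eq_mul, ZMod.natCast_val, ZMod.cast_id]
  rw [h, map_add, map_nsmul, map_nsmul]

lemma hom_ext {f g : (ZMod p × ZMod (p^2)) →+ (ZMod p × ZMod (p^2))}
    (h1 : f (1, 0) = g (1, 0)) (h2 : f (0, 1) = g (0, 1)) : f = g := by
  ext z
  · show (f (z.1, z.2)).1 = (g (z.1, z.2)).1
    rw [hom_eval f z.1 z.2, hom_eval g z.1 z.2, h1, h2]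
  · show (f (z.1, z.2)).2 = (g (z.1, z.2)).2
    rw [hom_eval f z.1 z.2, hom_eval g z.1 z.2, h1, h2]

lemma phi_eq_zero_of_p_mul {x : ZMod (p^2)} (h : (p : ZMod (p^2)) * x = 0) :
    phi p x = 0 := by
  have hx : (p : ZMod (p^2)) * x = ((p * x.val : ℕ) : ZMod (p^2)) := by
    push_cast
    rw [ZMod.natCast_val, ZMod.cast_id]
  rw [hx] at h
  have hdvd : p^2 ∣ p * x.val := (ZMod.natCast_eq_zero_iff _ _).mp h
  have hp0 := Nat.pos_of_ne_zero hp.out.ne_zero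
  have hdvd2 : p ∣ x.val := by
    obtain ⟨k, hk⟩ := hdvd
    refine ⟨k, ?_⟩
    have : p * x.val = p * (p * k) := by rw [hk]; ring
    exact Nat.eq_of_mul_eq_mul_left hp0 this
  rw [phi_eq_natCast]
  exact (ZMod.natCast_eq_zero_iff _ _).mpr hdvd2

lemma p_mul_f_e1 (f : (ZMod p × ZMod (p^2)) →+ (ZMod p × ZMod (p^2))) :
    phi p (f (1, 0)).2 = 0 := by
  have h : p • ((1 : ZMod p), (0 : ZMod (p^2))) = 0 := by
    ext
    · show p • (1 : ZMod p) = 0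
      simp [nsmul_eq_mul, ZMod.natCast_self]
    · show p • (0 : ZMod (p^2)) = 0
      simp
  have h2 : p • f (1, 0) = 0 := by rw [← map_nsmul, h, map_zero]
  have h3 : (p : ZMod (p^2)) * (f (1, 0)).2 = 0 := by
    have := congrArg Prod.snd h2
    simpa [nsmul_eq_mul] using this
  exact phi_eq_zero_of_p_mul h3


variable (p) in
/-- parameters -/
abbrev Q := ZMod p × ZMod p × ZMod p × ZMod (p^2)

variable (p) in
def EEnd : Q p ≃ ((ZMod p × ZMod (p^2)) →+ (ZMod p × ZMod (p^2))) where
  toFun q := fq p q.1 q.2.1 q.2.2.1 q.2.2.2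
  invFun f := ((f (1, 0)).1, (f (0, 1)).1, eps p (f (1, 0)).2, (f (0, 1)).2)
  left_inv q := by
    obtain ⟨a, b, c, d⟩ := q
    simp only [fq_e1, fq_e2, eps_muF]
  right_inv f := by
    apply hom_ext
    · rw [fq_e1]
      have : muF p (eps p (f (1,0)).2) = (f (1,0)).2 := muF_eps (p_mul_f_e1 f)
      rw [this]
    · rw [fq_e2]

lemma fq_bijective_iff (a b c : ZMod p) (d : ZMod (p^2)) :
    Function.Bijective (fq p a b c d) ↔ a ≠ 0 ∧ IsUnit d := by
  rw [← Finite.injective_iff_bijective]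
  constructor
  · intro hinj
    constructor
    · intro ha
      by_cases hc : c = 0
      · have : fq p a b c d (1, 0) = fq p a b c d 0 := by
          rw [fq_e1, map_zero, ha, hc, muF_zero]
          rfl
        have := hinj this
        simp [Prod.ext_iff] at this
      · -- a = 0, c ≠ 0 : use (x, muF t) with c x + phi d * t = 0, t = 1, x = -c⁻¹ phi d
        have : fq p a b c d (-(c⁻¹ * phi p d), muF p 1) = fq p a b c d 0 := by
          rw [map_zero, fq_apply]
          ext
          · show a * _ + b * phi p (muF p 1) = 0
            rw [ha, phi_muF]; ring
          · show muF p (c * -(c⁻¹ * phi p d)) + d * muF p 1 = 0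
            have h1 : d * muF p 1 = muF p (phi p d * 1) := by
              rw [mul_comm d, mu_mul_eq]; ring_nf
            rw [h1]
            have h2 : c * -(c⁻¹ * phi p d) = -(phi p d) := by
              rw [show c * -(c⁻¹ * phi p d) = -(c * c⁻¹ * phi p d) by ring,
                mul_inv_cancel₀ hc, one_mul]
            rw [h2, ← muF_add]
            ring_nf
            exact muF_zero
        have := hinj this
        rw [Prod.ext_iff] at this
        have h1 := this.2
        simp only [Prod.snd] at h1
        have : muF p 1 = 0 := h1
        rw [muF_eq_zero_iff] at this
        exact one_ne_zero this
    · rw [isUnit_iff_phi_ne_zero]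
      intro hd
      have : fq p a b c d (0, muF p 1) = fq p a b c d 0 := by
        rw [map_zero, fq_apply]
        ext
        · show a * 0 + b * phi p (muF p 1) = 0
          rw [phi_muF]; ring
        · show muF p (c * 0) + d * muF p 1 = 0
          have h1 : d * muF p 1 = muF p (phi p d * 1) := by
            rw [mul_comm d, mu_mul_eq]; ring_nf
          rw [h1, hd]
          simp [muF_zero]
      have := hinj this
      rw [Prod.ext_iff] at this
      have : muF p 1 = 0 := this.2
      rw [muF_eq_zero_iff] at this
      exact one_ne_zero this
  · rintro ⟨ha, hd⟩
    have hphid := (isUnit_iff_phi_ne_zero d).mp hd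
    intro g h hgh
    obtain ⟨u, hu⟩ := hd
    have h0 : fq p a b c d (g - h) = 0 := by rw [map_sub, hgh, sub_self]
    rw [fq_apply, Prod.ext_iff] at h0
    obtain ⟨h1, h2⟩ := h0
    set x := (g - h).1 with hx
    set y := (g - h).2 with hy
    simp only [Prod.fst_zero, Prod.snd_zero] at h1 h2
    have hpy : phi p y = 0 := by
      have hphi2 : phi p (muF p (c * x) + d * y) = 0 := by rw [h2, map_zero]
      rw [map_add, map_mul, phi_muF, zero_add] at hphi2
      rcases mul_eq_zero.mp hphi2 with h | h
      · exact absurd h hphid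
      · exact h
    have hx0 : x = 0 := by
      rw [hpy, mul_zero, add_zero] at h1
      rcases mul_eq_zero.mp h1 with h | h
      · exact absurd h ha
      · exact h
    have hy0 : y = 0 := by
      rw [hx0, mul_zero, muF_zero, zero_add, ← hu] at h2
      calc y = ↑u⁻¹ * (↑u * y) := by rw [← mul_assoc, Units.inv_mul, one_mul]
      _ = 0 := by rw [h2, mul_zero]
    have : g - h = 0 := by
      rw [Prod.ext_iff]
      exact ⟨hx0, hy0⟩
    exact sub_eq_zero.mp this

/-! ### kernel counting -/

lemma muF_neg (t : ZMod p) : muF p (-t) = -muF p t := by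
  have : muF p (-t) + muF p t = 0 := by rw [← muF_add, neg_add_cancel, muF_zero]
  linear_combination this

variable (p) in
noncomputable def cardM (E : ZMod (p^2)) : ℕ := Nat.card {y : ZMod (p^2) // E * y = 0}

lemma cardM_unit {E : ZMod (p^2)} (h : IsUnit E) : cardM p E = 1 := by
  have heq : ∀ y : ZMod (p^2), (E * y = 0) ↔ y = 0 := by
    intro y
    constructor
    · intro hy
      obtain ⟨u, rfl⟩ := h
      calc y = (↑u⁻¹ : ZMod (p^2)) * ((↑u : ZMod (p^2)) * y) := by
            rw [← mul_assoc, Units.inv_mul, one_mul]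
      _ = 0 := by rw [hy, mul_zero]
    · rintro rfl; rw [mul_zero]
  rw [cardM, Nat.card_congr (Equiv.subtypeEquivRight heq)]
  haveI : Unique {y : ZMod (p^2) // y = 0} :=
    ⟨⟨⟨0, rfl⟩⟩, fun y => Subtype.ext y.2⟩
  exact Nat.card_unique

variable (p) in
def kerPhiEquiv : ZMod p ≃ {y : ZMod (p^2) // phi p y = 0} where
  toFun t := ⟨muF p t, phi_muF t⟩
  invFun y := eps p y.1
  left_inv t := eps_muF t
  right_inv y := Subtype.ext (muF_eps y.2)

lemma cardM_muF {t : ZMod p} (ht : t ≠ 0) : cardM p (muF p t) = p := by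
  have h : ∀ y : ZMod (p^2), (muF p t * y = 0) ↔ phi p y = 0 := by
    intro y
    rw [mu_mul_eq]
    rw [show (0 : ZMod (p^2)) = muF p 0 from muF_zero.symm]
    rw [muF_injective.eq_iff]
    constructor
    · intro h
      rcases mul_eq_zero.mp h with h | h
      · exact absurd h ht
      · exact h
    · intro h; rw [h, mul_zero]
  rw [cardM, Nat.card_congr (Equiv.subtypeEquivRight h),
    Nat.card_congr (kerPhiEquiv p).symm, Nat.card_zmod]

lemma cardM_zero : cardM p 0 = p^2 := by
  rw [cardM, Nat.card_congr (Equiv.subtypeUnivEquiv (fun y => zero_mul y)), Nat.card_zmod]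

variable (p) in
def solT (A B C : ZMod p) (D : ZMod (p^2)) :=
  {g : ZMod p × ZMod (p^2) //
    A * g.1 + B * phi p g.2 = 0 ∧ muF p (C * g.1) + D * g.2 = 0}

lemma sol_card_A_ne {A : ZMod p} (B C : ZMod p) (D : ZMod (p^2)) (hA : A ≠ 0) :
    Nat.card (solT p A B C D) = cardM p (D - muF p (A⁻¹ * B * C)) := by
  rw [cardM]
  have key : ∀ (x : ZMod p) (y : ZMod (p^2)), x = -(A⁻¹ * B * phi p y) →
      muF p (C * x) = -(muF p (A⁻¹ * B * C) * y) := by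
    intro x y hx
    rw [show C * x = -(A⁻¹ * B * C * phi p y) by rw [hx]; ring, muF_neg, ← mu_mul_eq]
  apply Nat.card_congr
  refine ⟨fun g => ⟨g.1.2, ?_⟩, fun y => ⟨(-(A⁻¹ * B * phi p y.1), y.1), ?_, ?_⟩, ?_, ?_⟩
  · obtain ⟨⟨x, y⟩, h1, h2⟩ := g
    simp only at h1 h2 ⊢
    have hx : x = -(A⁻¹ * B * phi p y) := by
      have hax : A * x = -(B * phi p y) := by linear_combination h1
      calc x = A⁻¹ * (A * x) := by rw [← mul_assoc, inv_mul_cancel₀ hA, one_mul]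
      _ = -(A⁻¹ * B * phi p y) := by rw [hax]; ring
    have hCx := key x y hx
    rw [hCx] at h2
    linear_combination h2
  · obtain ⟨y, hy⟩ := y
    simp only
    rw [show A * -(A⁻¹ * B * phi p y) = -(A * A⁻¹ * B * phi p y) by ring,
      mul_inv_cancel₀ hA]
    ring
  · obtain ⟨y, hy⟩ := y
    simp only
    rw [key _ y rfl]
    linear_combination hy
  · intro g
    obtain ⟨⟨x, y⟩, h1, h2⟩ := g
    apply Subtype.ext
    simp only [Prod.mk.injEq]
    refine ⟨?_, trivial⟩
    have hax : A * x = -(B * phi p y) := by linear_combination h1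
    calc -(A⁻¹ * B * phi p y) = A⁻¹ * -(B * phi p y) := by ring
    _ = A⁻¹ * (A * x) := by rw [hax]
    _ = x := by rw [← mul_assoc, inv_mul_cancel₀ hA, one_mul]
  · intro y
    apply Subtype.ext
    rfl

variable (p) in
noncomputable def planeCard (C v : ZMod p) : ℕ :=
  Nat.card {x : ZMod p × ZMod p // C * x.1 + v * x.2 = 0}

lemma planeCard_C_ne {C : ZMod p} (v : ZMod p) (hC : C ≠ 0) : planeCard p C v = p := by
  rw [planeCard]
  refine (Nat.card_congr (⟨fun x => x.1.2, fun s => ⟨(-(C⁻¹ * v * s), s), ?_⟩, ?_,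
    fun s => rfl⟩ : {x : ZMod p × ZMod p // C * x.1 + v * x.2 = 0} ≃ ZMod p)).trans
    (Nat.card_zmod p)
  · rw [show C * -(C⁻¹ * v * s) = -(C * C⁻¹ * (v * s)) by ring, mul_inv_cancel₀ hC]
    ring
  · rintro ⟨⟨x, s⟩, h⟩
    apply Subtype.ext
    simp only [Prod.mk.injEq]
    refine ⟨?_, trivial⟩
    have hax : C * x = -(v * s) := by linear_combination h
    calc -(C⁻¹ * v * s) = C⁻¹ * -(v * s) := by ring
    _ = C⁻¹ * (C * x) := by rw [hax]
    _ = x := by rw [← mul_assoc, inv_mul_cancel₀ hC, one_mul]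

lemma planeCard_v_ne {v : ZMod p} (hv : v ≠ 0) : planeCard p 0 v = p := by
  rw [planeCard]
  refine (Nat.card_congr (⟨fun x => x.1.1, fun x => ⟨(x, 0), by ring⟩, ?_,
    fun x => rfl⟩ : {x : ZMod p × ZMod p // 0 * x.1 + v * x.2 = 0} ≃ ZMod p)).trans
    (Nat.card_zmod p)
  · rintro ⟨⟨x, s⟩, h⟩
    apply Subtype.ext
    simp only [Prod.mk.injEq]
    refine ⟨trivial, ?_⟩
    rw [zero_mul, zero_add] at h
    rcases mul_eq_zero.mp h with h | h
    · exact absurd h hv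
    · exact h.symm

lemma planeCard_zero : planeCard p 0 0 = p^2 := by
  rw [planeCard, Nat.card_congr (Equiv.subtypeUnivEquiv (fun x => by ring)),
    Nat.card_prod, Nat.card_zmod, pow_two]

lemma sol_card_B_ne {B : ZMod p} (C : ZMod p) (D : ZMod (p^2)) (hB : B ≠ 0) :
    Nat.card (solT p 0 B C D) = planeCard p C (phi p D) := by
  rw [planeCard]
  apply Nat.card_congr
  have hDmu : ∀ s : ZMod p, D * muF p s = muF p (phi p D * s) := by
    intro s
    rw [mul_comm D, mu_mul_eq, mul_comm]
  refine ⟨fun g => ⟨(g.1.1, eps p g.1.2), ?_⟩, fun x => ⟨(x.1.1, muF p x.1.2), ?_, ?_⟩, ?_, ?_⟩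
  · obtain ⟨⟨x, y⟩, h1, h2⟩ := g
    simp only at h1 h2 ⊢
    have hpy : phi p y = 0 := by
      rw [zero_mul, zero_add] at h1
      rcases mul_eq_zero.mp h1 with h | h
      · exact absurd h hB
      · exact h
    have hy : y = muF p (eps p y) := (muF_eps hpy).symm
    rw [hy, hDmu, ← muF_add] at h2
    rw [show (0:ZMod (p^2)) = muF p 0 from muF_zero.symm] at h2
    exact muF_injective h2
  · obtain ⟨⟨x, s⟩, h⟩ := x
    simp only
    rw [phi_muF]
    ring
  · obtain ⟨⟨x, s⟩, h⟩ := x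
    simp only
    rw [hDmu, ← muF_add, h, muF_zero]
  · rintro ⟨⟨x, y⟩, h1, h2⟩
    apply Subtype.ext
    simp only [Prod.mk.injEq]
    refine ⟨trivial, ?_⟩
    have hpy : phi p y = 0 := by
      rw [zero_mul, zero_add] at h1
      rcases mul_eq_zero.mp h1 with h | h
      · exact absurd h hB
      · exact h
    exact muF_eps hpy
  · rintro ⟨⟨x, s⟩, h⟩
    apply Subtype.ext
    simp only [Prod.mk.injEq]
    exact ⟨trivial, eps_muF s⟩

lemma sol_card_00_unit (C : ZMod p) {D : ZMod (p^2)} (hD : IsUnit D) :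
    Nat.card (solT p 0 0 C D) = p := by
  obtain ⟨u, rfl⟩ := hD
  rw [solT]
  have hval : ∀ x : ZMod p,
      (↑u : ZMod (p^2)) * ((↑u⁻¹ : ZMod (p^2)) * -(muF p (C * x))) = -(muF p (C * x)) := by
    intro x
    rw [← mul_assoc, Units.mul_inv, one_mul]
  refine (Nat.card_congr (⟨fun g => g.1.1,
    fun x => ⟨(x, (↑u⁻¹ : ZMod (p^2)) * -(muF p (C * x))), by
      constructor
      · simp
      · simp only
        rw [hval]
        ring⟩, ?_, fun x => rfl⟩ :
      solT p 0 0 C ↑u ≃ ZMod p)).trans (Nat.card_zmod p)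
  rintro ⟨⟨x, y⟩, h1, h2⟩
  apply Subtype.ext
  simp only [Prod.mk.injEq]
  refine ⟨trivial, ?_⟩
  simp only at h2
  have : (↑u : ZMod (p^2)) * y = -(muF p (C * x)) := by linear_combination h2
  calc (↑u⁻¹ : ZMod (p^2)) * -(muF p (C * x)) = ↑u⁻¹ * (↑u * y) := by rw [this]
  _ = y := by rw [← mul_assoc, Units.inv_mul, one_mul]

lemma solT00_mu_iff (C t : ZMod p) (g : ZMod p × ZMod (p^2)) :
    ((0:ZMod p) * g.1 + 0 * phi p g.2 = 0 ∧ muF p (C * g.1) + muF p t * g.2 = 0)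
      ↔ C * g.1 + t * phi p g.2 = 0 := by
  rw [mu_mul_eq, ← muF_add, show (0:ZMod (p^2)) = muF p 0 from muF_zero.symm,
    muF_injective.eq_iff]
  constructor
  · exact fun h => h.2
  · intro h
    exact ⟨by ring, h⟩

lemma sol_card_00_mu_C_ne {C : ZMod p} (t : ZMod p) (hC : C ≠ 0) :
    Nat.card (solT p 0 0 C (muF p t)) = p^2 := by
  rw [solT]
  refine (Nat.card_congr ((Equiv.subtypeEquivRight (solT00_mu_iff C t)).trans
    (⟨fun g => g.1.2, fun y => ⟨(-(C⁻¹ * t * phi p y), y), ?_⟩, ?_, fun y => rfl⟩ :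
      {g : ZMod p × ZMod (p^2) // C * g.1 + t * phi p g.2 = 0} ≃ ZMod (p^2)))).trans
    ((Nat.card_zmod (p^2)))
  · simp only
    rw [show C * -(C⁻¹ * t * phi p y) = -(C * C⁻¹ * (t * phi p y)) by ring,
      mul_inv_cancel₀ hC]
    ring
  · rintro ⟨⟨x, y⟩, h⟩
    apply Subtype.ext
    simp only [Prod.mk.injEq]
    refine ⟨?_, trivial⟩
    have hax : C * x = -(t * phi p y) := by linear_combination h
    calc -(C⁻¹ * t * phi p y) = C⁻¹ * -(t * phi p y) := by ring
    _ = C⁻¹ * (C * x) := by rw [hax]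
    _ = x := by rw [← mul_assoc, inv_mul_cancel₀ hC, one_mul]

lemma sol_card_00_mu_t_ne {t : ZMod p} (ht : t ≠ 0) :
    Nat.card (solT p 0 0 0 (muF p t)) = p^2 := by
  rw [solT]
  have key : ∀ g : ZMod p × ZMod (p^2),
      ((0:ZMod p) * g.1 + 0 * phi p g.2 = 0 ∧ muF p ((0:ZMod p) * g.1) + muF p t * g.2 = 0)
        ↔ phi p g.2 = 0 := by
    intro g
    rw [solT00_mu_iff]
    constructor
    · intro h
      rw [zero_mul, zero_add] at h
      rcases mul_eq_zero.mp h with h | h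
      · exact absurd h ht
      · exact h
    · intro h
      rw [h]; ring
  refine (Nat.card_congr ((Equiv.subtypeEquivRight key).trans
    (⟨fun g => (g.1.1, eps p g.1.2), fun x => ⟨(x.1, muF p x.2), phi_muF x.2⟩, ?_, ?_⟩ :
      {g : ZMod p × ZMod (p^2) // phi p g.2 = 0} ≃ ZMod p × ZMod p))).trans ?_
  · rintro ⟨⟨x, y⟩, h⟩
    apply Subtype.ext
    simp only [Prod.mk.injEq]
    exact ⟨trivial, muF_eps h⟩
  · rintro ⟨x, s⟩
    simp only [Prod.mk.injEq]
    exact ⟨trivial, eps_muF s⟩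
  · rw [Nat.card_prod, Nat.card_zmod, pow_two]

lemma sol_card_00_zero : Nat.card (solT p 0 0 0 (muF p 0)) = p^3 := by
  rw [solT]
  have key : ∀ g : ZMod p × ZMod (p^2),
      ((0:ZMod p) * g.1 + 0 * phi p g.2 = 0 ∧ muF p ((0:ZMod p) * g.1) + muF p 0 * g.2 = 0) := by
    intro g
    rw [solT00_mu_iff]
    ring
  rw [Nat.card_congr (Equiv.subtypeUnivEquiv key), Nat.card_prod, Nat.card_zmod, Nat.card_zmod]
  ring

/-! ### characterization -/

variable (p) in
noncomputable def fixCard (a b c : ZMod p) (d : ZMod (p^2)) : ℕ :=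
  Nat.card {g : ZMod p × ZMod (p^2) // fq p a b c d g = g}

lemma fixCard_eq_sol (a b c : ZMod p) (d : ZMod (p^2)) :
    fixCard p a b c d = Nat.card (solT p (a-1) b c (d-1)) := by
  rw [fixCard, solT]
  apply Nat.card_congr
  apply Equiv.subtypeEquivRight
  intro g
  rw [fq_apply, Prod.ext_iff]
  constructor
  · rintro ⟨h1, h2⟩
    simp only at h1 h2
    constructor
    · linear_combination h1
    · linear_combination h2
  · rintro ⟨h1, h2⟩
    constructor
    · show a * g.1 + b * phi p g.2 = g.1
      linear_combination h1
    · show muF p (c * g.1) + d * g.2 = g.2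
      linear_combination h2

variable (p) in
def Cond' (a b c : ZMod p) (d : ZMod (p^2)) : Prop :=
  (a ≠ 0 ∧ a ≠ 1 ∧ phi p d = 1 ∧ d ≠ 1 + muF p ((a-1)⁻¹ * b * c))
  ∨ (a = 1 ∧ b ≠ 0 ∧ phi p d ≠ 0 ∧ ¬(c = 0 ∧ phi p d = 1))
  ∨ (a = 1 ∧ b = 0 ∧ phi p d ≠ 0 ∧ phi p d ≠ 1)

lemma cond_iff (a b c : ZMod p) (d : ZMod (p^2)) :
    ((a ≠ 0 ∧ IsUnit d) ∧ fixCard p a b c d = p) ↔ Cond' p a b c d := by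
  have hp1 : p ≠ 1 := hp.out.ne_one
  have hp0 : 0 < p := Nat.pos_of_ne_zero hp.out.ne_zero
  have hpsq : p^2 ≠ p := by
    intro h
    apply hp1
    have : p * p = p * 1 := by rw [mul_one, ← pow_two, h]
    exact Nat.eq_of_mul_eq_mul_left hp0 this
  have hpcb : p^3 ≠ p := by
    intro h
    apply hp1
    have h1 : p * (p * p) = p * 1 := by rw [mul_one, show p * (p*p) = p^3 by ring, h]
    have h2 : p * p = 1 := Nat.eq_of_mul_eq_mul_left hp0 h1
    exact Nat.eq_one_of_dvd_one ⟨p, h2.symm⟩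
  rw [fixCard_eq_sol]
  by_cases ha1 : a = 1
  · subst ha1
    simp only [sub_self]
    by_cases hb : b = 0
    · subst hb
      -- case a = 1, b = 0
      rw [Cond']
      have hiff : ∀ X, ((1:ZMod p) ≠ 0 ∧ IsUnit d) ∧ X ↔ (IsUnit d ∧ X) := by
        intro X
        constructor
        · rintro ⟨⟨-, h⟩, hX⟩; exact ⟨h, hX⟩
        · rintro ⟨h, hX⟩; exact ⟨⟨one_ne_zero, h⟩, hX⟩
      rw [hiff]
      by_cases hd1 : IsUnit (d - 1)
      · rw [sol_card_00_unit c hd1]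
        have hphid1 : phi p d ≠ 1 := by
          have := (isUnit_iff_phi_ne_zero _).mp hd1
          rw [map_sub, map_one] at this
          intro h
          exact this (by rw [h, sub_self])
        simp only [isUnit_iff_phi_ne_zero]
        tauto
      · have hphi : phi p (d - 1) = 0 := by
          by_contra h
          exact hd1 ((isUnit_iff_phi_ne_zero _).mpr h)
        have hphid1 : phi p d = 1 := by
          rw [map_sub, map_one, sub_eq_zero] at hphi
          exact hphi
        obtain ⟨t, ht⟩ := (phi_eq_zero_iff_exists _).mp hphi
        rw [ht]
        have hcard : Nat.card (solT p 0 0 c (muF p t)) ≠ p := by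
          by_cases hc : c = 0
          · subst hc
            by_cases htz : t = 0
            · subst htz
              rw [sol_card_00_zero]
              exact fun h => hpcb h
            · rw [sol_card_00_mu_t_ne htz]
              exact fun h => hpsq h
          · rw [sol_card_00_mu_C_ne t hc]
            exact fun h => hpsq h
        simp only [isUnit_iff_phi_ne_zero]
        constructor
        · rintro ⟨-, h⟩
          exact absurd h hcard
        · rintro (⟨-, h, -⟩ | ⟨-, h, -⟩ | ⟨-, -, -, h⟩)
          · exact absurd rfl h
          · exact absurd rfl h
          · exact absurd hphid1 h
    · -- case a = 1, b ≠ 0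
      rw [Cond', sol_card_B_ne c (d-1) hb]
      have hphisub : phi p (d - 1) = phi p d - 1 := by rw [map_sub, map_one]
      have hiff2 : planeCard p c (phi p (d-1)) = p ↔ ¬(c = 0 ∧ phi p d = 1) := by
        by_cases hc : c = 0
        · subst hc
          by_cases hv : phi p d = 1
          · rw [hphisub, hv, sub_self, planeCard_zero]
            simp [hv, hpsq]
          · rw [hphisub, planeCard_v_ne (sub_ne_zero.mpr hv)]
            simp [hv]
        · rw [planeCard_C_ne _ hc]
          simp [hc]
      rw [hiff2]
      simp only [isUnit_iff_phi_ne_zero]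
      constructor
      · rintro ⟨⟨-, hd⟩, h⟩
        refine Or.inr (Or.inl ⟨by simp, hb, hd, h⟩)
      · rintro (⟨-, h, -⟩ | ⟨-, -, hd, h⟩ | ⟨-, h, -⟩)
        · exact absurd rfl h
        · exact ⟨⟨one_ne_zero, hd⟩, h⟩
        · exact absurd h hb
  · -- case a ≠ 1
    have hA : a - 1 ≠ 0 := sub_ne_zero.mpr ha1
    rw [Cond', sol_card_A_ne b c (d-1) hA]
    set E := d - 1 - muF p ((a-1)⁻¹ * b * c) with hE
    by_cases hphiE : phi p E = 0
    · obtain ⟨t, ht⟩ := (phi_eq_zero_iff_exists _).mp hphiE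
      have hphid : phi p d = 1 := by
        have : phi p E = phi p d - 1 - 0 := by
          rw [hE, map_sub, map_sub, map_one, phi_muF]
        rw [this] at hphiE
        linear_combination hphiE
      have hdneq : (E ≠ 0) ↔ d ≠ 1 + muF p ((a-1)⁻¹ * b * c) := by
        rw [hE]
        constructor
        · intro h hh
          apply h
          rw [hh]; ring
        · intro h hh
          apply h
          linear_combination hh
      rw [ht]
      by_cases htz : t = 0
      · subst htz
        rw [muF_zero, cardM_zero]
        have hEzero : E = 0 := by rw [ht, muF_zero]
        have : ¬ (d ≠ 1 + muF p ((a-1)⁻¹ * b * c)) := by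
          rw [← hdneq]
          simp [hEzero]
        constructor
        · rintro ⟨-, h⟩
          exact absurd h hpsq
        · rintro (⟨-, -, -, h⟩ | ⟨h, -⟩ | ⟨h, -⟩)
          · exact absurd h this
          · exact absurd h ha1
          · exact absurd h ha1
      · rw [cardM_muF htz]
        have hEne : E ≠ 0 := by
          rw [ht, Ne, muF_eq_zero_iff]
          exact htz
        have hdu : IsUnit d := by
          rw [isUnit_iff_phi_ne_zero, hphid]
          exact one_ne_zero
        constructor
        · rintro ⟨⟨ha0, -⟩, -⟩
          exact Or.inl ⟨ha0, ha1, hphid, hdneq.mp hEne⟩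
        · rintro (⟨h1, -, -, -⟩ | ⟨h, -⟩ | ⟨h, -⟩)
          · exact ⟨⟨h1, hdu⟩, rfl⟩
          · exact absurd h ha1
          · exact absurd h ha1
    · have hunit : IsUnit E := (isUnit_iff_phi_ne_zero _).mpr hphiE
      rw [cardM_unit hunit]
      have hphid : phi p d ≠ 1 := by
        intro h
        apply hphiE
        rw [hE, map_sub, map_sub, map_one, phi_muF, h]
        ring
      constructor
      · rintro ⟨-, h⟩
        exact absurd h.symm hp1
      · rintro (⟨-, -, h, -⟩ | ⟨h, -⟩ | ⟨h, -⟩)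
        · exact absurd h hphid
        · exact absurd h ha1
        · exact absurd h ha1

/-! ### assembly -/

variable (p) in
noncomputable def autEquiv :
    {q : Q p // q.1 ≠ 0 ∧ IsUnit q.2.2.2} ≃ AddAut (ZMod p × ZMod (p^2)) where
  toFun q := AddEquiv.ofBijective (EEnd p q.1)
    ((fq_bijective_iff q.1.1 q.1.2.1 q.1.2.2.1 q.1.2.2.2).mpr q.2)
  invFun f := ⟨(EEnd p).symm f.toAddMonoidHom, by
    have h1 : EEnd p ((EEnd p).symm f.toAddMonoidHom) = f.toAddMonoidHom :=
      (EEnd p).apply_symm_apply _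
    set q' := (EEnd p).symm f.toAddMonoidHom with hq'
    have h2 : Function.Bijective (fq p q'.1 q'.2.1 q'.2.2.1 q'.2.2.2) := by
      have : fq p q'.1 q'.2.1 q'.2.2.1 q'.2.2.2 = EEnd p q' := rfl
      rw [this, h1]
      exact f.bijective
    exact (fq_bijective_iff _ _ _ _).mp h2⟩
  left_inv q := by
    apply Subtype.ext
    have h : ∀ hb, (AddEquiv.ofBijective (EEnd p q.1) hb).toAddMonoidHom
        = EEnd p q.1 := fun hb => AddMonoidHom.ext fun x => rfl
    show (EEnd p).symm _ = q.1
    exact (congrArg (EEnd p).symm (h _)).trans (Equiv.symm_apply_apply _ _)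
  right_inv f := by
    apply AddEquiv.ext
    intro x
    show (EEnd p ((EEnd p).symm f.toAddMonoidHom)) x = f x
    rw [(EEnd p).apply_symm_apply]
    rfl

lemma autEquiv_apply_coe (q : {q : Q p // q.1 ≠ 0 ∧ IsUnit q.2.2.2})
    (g : ZMod p × ZMod (p^2)) :
    (autEquiv p q) g = fq p q.1.1 q.1.2.1 q.1.2.2.1 q.1.2.2.2 g := rfl

variable (p) in
lemma main_reduction :
    Nat.card {f : AddAut (ZMod p × ZMod (p ^ 2)) //
      Nat.card {g : ZMod p × ZMod (p ^ 2) // f g = g} = p} =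
    Nat.card {q : Q p // Cond' p q.1 q.2.1 q.2.2.1 q.2.2.2} := by
  have e1 : {f : AddAut (ZMod p × ZMod (p ^ 2)) //
      Nat.card {g : ZMod p × ZMod (p ^ 2) // f g = g} = p} ≃
      {q : {q : Q p // q.1 ≠ 0 ∧ IsUnit q.2.2.2} //
        Nat.card {g : ZMod p × ZMod (p ^ 2) // fq p q.1.1 q.1.2.1 q.1.2.2.1 q.1.2.2.2 g = g} = p} := by
    refine (Equiv.subtypeEquiv (autEquiv p).symm ?_)
    intro f
    have : ∀ g, (f : ZMod p × ZMod (p^2) → ZMod p × ZMod (p^2)) g =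
        fq p ((autEquiv p).symm f).1.1 ((autEquiv p).symm f).1.2.1
          ((autEquiv p).symm f).1.2.2.1 ((autEquiv p).symm f).1.2.2.2 g := by
      intro g
      conv_lhs => rw [← (autEquiv p).apply_symm_apply f]
      rfl
    have hcards : Nat.card {g : ZMod p × ZMod (p^2) // f g = g} =
        Nat.card {g : ZMod p × ZMod (p^2) // fq p ((autEquiv p).symm f).1.1
          ((autEquiv p).symm f).1.2.1 ((autEquiv p).symm f).1.2.2.1
          ((autEquiv p).symm f).1.2.2.2 g = g} :=
      Nat.card_congr (Equiv.subtypeEquivRight (fun g => by rw [this g]))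
    rw [hcards]
  rw [Nat.card_congr e1]
  have e2 : {q : {q : Q p // q.1 ≠ 0 ∧ IsUnit q.2.2.2} //
        Nat.card {g : ZMod p × ZMod (p ^ 2) // fq p q.1.1 q.1.2.1 q.1.2.2.1 q.1.2.2.2 g = g} = p}
      ≃ {q : Q p // (q.1 ≠ 0 ∧ IsUnit q.2.2.2) ∧ fixCard p q.1 q.2.1 q.2.2.1 q.2.2.2 = p} :=
    Equiv.subtypeSubtypeEquivSubtypeInter (fun q : Q p => q.1 ≠ 0 ∧ IsUnit q.2.2.2)
      (fun q : Q p => fixCard p q.1 q.2.1 q.2.2.1 q.2.2.2 = p)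
  rw [Nat.card_congr e2]
  apply Nat.card_congr
  apply Equiv.subtypeEquivRight
  intro q
  exact cond_iff q.1 q.2.1 q.2.2.1 q.2.2.2

/-! ### counting -/

instance (a b c : ZMod p) (d : ZMod (p^2)) : Decidable (Cond' p a b c d) := by
  unfold Cond'
  infer_instance

lemma card_v_ne : (Finset.univ.filter (fun v : ZMod p => v ≠ 0)).card = p - 1 := by
  rw [Finset.filter_ne' Finset.univ 0, Finset.card_erase_of_mem (Finset.mem_univ _),
    Finset.card_univ, ZMod.card]

lemma card_v_ne_ne : (Finset.univ.filter (fun v : ZMod p => v ≠ 0 ∧ v ≠ 1)).card = p - 2 := by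
  have h : Finset.univ.filter (fun v : ZMod p => v ≠ 0 ∧ v ≠ 1)
      = (Finset.univ.erase 0).erase 1 := by
    ext v
    simp [Finset.mem_erase, and_comm]
  rw [h, Finset.card_erase_of_mem, Finset.card_erase_of_mem (Finset.mem_univ _),
    Finset.card_univ, ZMod.card]
  · omega
  · rw [Finset.mem_erase]
    exact ⟨one_ne_zero, Finset.mem_univ _⟩

variable (p) in
def digSubEquiv (P : ZMod p → Prop) :
    {d : ZMod (p^2) // P (phi p d)} ≃ {v : ZMod p // P v} × ZMod p where
  toFun d := (⟨phi p d.1, d.2⟩, eps p d.1)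
  invFun x := ⟨iot p x.1.1 + muF p x.2, by
    rw [map_add, phi_iot, phi_muF, add_zero]; exact x.1.2⟩
  left_inv d := by
    apply Subtype.ext
    exact (Dig p).left_inv d.1
  right_inv x := by
    obtain ⟨⟨v, hv⟩, s⟩ := x
    have h := (Dig p).right_inv (v, s)
    rw [Prod.ext_iff] at h
    obtain ⟨h1, h2⟩ := h
    refine Prod.ext (Subtype.ext ?_) ?_
    · exact h1
    · exact h2

lemma card_phi_cond (P : ZMod p → Prop) [DecidablePred P] :
    (Finset.univ.filter (fun d : ZMod (p^2) => P (phi p d))).card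
      = (Finset.univ.filter P).card * p := by
  rw [← Fintype.card_subtype, ← Fintype.card_subtype]
  rw [Fintype.card_congr (digSubEquiv p P), Fintype.card_prod, ZMod.card]

lemma card_d_ne_zero :
    (Finset.univ.filter (fun d : ZMod (p^2) => phi p d ≠ 0)).card = (p - 1) * p := by
  rw [card_phi_cond (fun v => v ≠ 0), card_v_ne]

lemma card_d_ne_zero_one :
    (Finset.univ.filter (fun d : ZMod (p^2) => phi p d ≠ 0 ∧ phi p d ≠ 1)).card
      = (p - 2) * p := by
  rw [card_phi_cond (fun v => v ≠ 0 ∧ v ≠ 1), card_v_ne_ne]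

lemma card_d_eq_one_ne (e : ZMod (p^2)) (he : phi p e = 1) :
    (Finset.univ.filter (fun d : ZMod (p^2) => phi p d = 1 ∧ d ≠ e)).card = p - 1 := by
  have h : Finset.univ.filter (fun d : ZMod (p^2) => phi p d = 1 ∧ d ≠ e)
      = (Finset.univ.filter (fun d : ZMod (p^2) => phi p d = 1)).erase e := by
    ext d
    simp only [Finset.mem_erase, Finset.mem_filter, Finset.mem_univ, true_and]
    tauto
  rw [h, Finset.card_erase_of_mem]
  · have : (Finset.univ.filter (fun d : ZMod (p^2) => phi p d = 1)).card = 1 * p := by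
      rw [card_phi_cond (fun v => v = 1)]
      congr 1
      rw [Finset.filter_eq' Finset.univ 1]
      simp
    rw [this, one_mul]
  · rw [Finset.mem_filter]
    exact ⟨Finset.mem_univ _, he⟩

variable (p) in
def Fcnt (a b c : ZMod p) : ℕ :=
  (Finset.univ.filter (fun d : ZMod (p^2) => Cond' p a b c d)).card

lemma Fcnt_gen {a : ZMod p} (b c : ZMod p) (ha0 : a ≠ 0) (ha1 : a ≠ 1) :
    Fcnt p a b c = p - 1 := by
  rw [Fcnt]
  have hiff : ∀ d ∈ Finset.univ, Cond' p a b c d ↔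
      (phi p d = 1 ∧ d ≠ 1 + muF p ((a-1)⁻¹ * b * c)) := by
    intro d _
    rw [Cond']
    constructor
    · rintro (⟨-, -, h3, h4⟩ | ⟨h, -⟩ | ⟨h, -⟩)
      · exact ⟨h3, h4⟩
      · exact absurd h ha1
      · exact absurd h ha1
    · rintro ⟨h1, h2⟩
      exact Or.inl ⟨ha0, ha1, h1, h2⟩
  rw [Finset.filter_congr hiff]
  apply card_d_eq_one_ne
  rw [map_add, map_one, phi_muF, add_zero]

lemma Fcnt_1bc {b c : ZMod p} (hb : b ≠ 0) (hc : c ≠ 0) :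
    Fcnt p 1 b c = (p - 1) * p := by
  rw [Fcnt]
  have hiff : ∀ d ∈ Finset.univ, Cond' p 1 b c d ↔ phi p d ≠ 0 := by
    intro d _
    rw [Cond']
    constructor
    · rintro (⟨-, h, -⟩ | ⟨-, -, h, -⟩ | ⟨-, h, -⟩)
      · exact absurd rfl h
      · exact h
      · exact absurd h hb
    · intro h
      refine Or.inr (Or.inl ⟨rfl, hb, h, ?_⟩)
      rintro ⟨hc0, -⟩
      exact hc hc0
  rw [Finset.filter_congr hiff, card_d_ne_zero]

lemma Fcnt_1b0 {b : ZMod p} (hb : b ≠ 0) :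
    Fcnt p 1 b 0 = (p - 2) * p := by
  rw [Fcnt]
  have hiff : ∀ d ∈ Finset.univ, Cond' p 1 b 0 d ↔ (phi p d ≠ 0 ∧ phi p d ≠ 1) := by
    intro d _
    rw [Cond']
    constructor
    · rintro (⟨-, h, -⟩ | ⟨-, -, h2, h3⟩ | ⟨-, h, -⟩)
      · exact absurd rfl h
      · refine ⟨h2, fun h1 => h3 ⟨rfl, h1⟩⟩
      · exact absurd h hb
    · rintro ⟨h1, h2⟩
      refine Or.inr (Or.inl ⟨rfl, hb, h1, ?_⟩)
      rintro ⟨-, hh⟩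
      exact h2 hh
  rw [Finset.filter_congr hiff, card_d_ne_zero_one]

lemma Fcnt_10c (c : ZMod p) :
    Fcnt p 1 0 c = (p - 2) * p := by
  rw [Fcnt]
  have hiff : ∀ d ∈ Finset.univ, Cond' p 1 0 c d ↔ (phi p d ≠ 0 ∧ phi p d ≠ 1) := by
    intro d _
    rw [Cond']
    constructor
    · rintro (⟨-, h, -⟩ | ⟨-, h, -⟩ | ⟨-, -, h2, h3⟩)
      · exact absurd rfl h
      · exact absurd rfl h
      · exact ⟨h2, h3⟩
    · rintro ⟨h1, h2⟩
      exact Or.inr (Or.inr ⟨rfl, rfl, h1, h2⟩)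
  rw [Finset.filter_congr hiff, card_d_ne_zero_one]

lemma Fcnt_0 (b c : ZMod p) : Fcnt p 0 b c = 0 := by
  rw [Fcnt, Finset.card_eq_zero]
  rw [Finset.filter_eq_empty_iff]
  intro d _
  rw [Cond']
  rintro (⟨h, -⟩ | ⟨h, -⟩ | ⟨h, -⟩)
  · exact h rfl
  · exact zero_ne_one h
  · exact zero_ne_one h

variable (p) in
lemma count_eq :
    Nat.card {q : Q p // Cond' p q.1 q.2.1 q.2.2.1 q.2.2.2} =
      (p - 2) * (p * (p * (p - 1)))
        + ((p - 1) * ((p - 1) * ((p - 1) * p) + (p - 2) * p) + p * ((p - 2) * p)) := by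
  have hcard_univ : (Finset.univ : Finset (ZMod p)).card = p := by
    rw [Finset.card_univ, ZMod.card]
  have hmem1 : (1 : ZMod p) ∈ (Finset.univ : Finset (ZMod p)).erase 0 :=
    Finset.mem_erase.mpr ⟨one_ne_zero, Finset.mem_univ _⟩
  have hcard_erase0 : ((Finset.univ : Finset (ZMod p)).erase 0).card = p - 1 := by
    rw [Finset.card_erase_of_mem (Finset.mem_univ _), hcard_univ]
  have hcard_erase01 : (((Finset.univ : Finset (ZMod p)).erase 0).erase 1).card = p - 2 := by
    rw [Finset.card_erase_of_mem hmem1, hcard_erase0]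
    omega
  rw [Nat.card_eq_fintype_card, Fintype.card_subtype, Finset.card_filter]
  simp only [Fintype.sum_prod_type]
  have h1 : ∀ a b c : ZMod p, (∑ d : ZMod (p^2), if Cond' p a b c d then 1 else 0)
      = Fcnt p a b c := fun a b c => (Finset.card_filter _ _).symm
  simp only [h1]
  -- inner c-sums
  have hSc_gen : ∀ a b : ZMod p, a ≠ 0 → a ≠ 1 →
      (∑ c : ZMod p, Fcnt p a b c) = p * (p - 1) := by
    intro a b ha0 ha1
    rw [Finset.sum_congr rfl (fun c _ => Fcnt_gen b c ha0 ha1), Finset.sum_const,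
      smul_eq_mul, hcard_univ]
  have hSc_1b : ∀ b : ZMod p, b ≠ 0 →
      (∑ c : ZMod p, Fcnt p 1 b c) = (p - 1) * ((p - 1) * p) + (p - 2) * p := by
    intro b hb
    rw [← Finset.sum_erase_add _ _ (Finset.mem_univ (0 : ZMod p))]
    congr 1
    · rw [Finset.sum_congr rfl
        (fun c hc => Fcnt_1bc hb (Finset.mem_erase.mp hc).1), Finset.sum_const,
        smul_eq_mul, hcard_erase0]
    · exact Fcnt_1b0 hb
  have hSc_10 : (∑ c : ZMod p, Fcnt p 1 0 c) = p * ((p - 2) * p) := by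
    rw [Finset.sum_congr rfl (fun c _ => Fcnt_10c c), Finset.sum_const,
      smul_eq_mul, hcard_univ]
  have hSc_0 : ∀ b : ZMod p, (∑ c : ZMod p, Fcnt p 0 b c) = 0 := by
    intro b
    rw [Finset.sum_congr rfl (fun c _ => Fcnt_0 b c), Finset.sum_const, smul_eq_mul,
      mul_zero]
  -- b-sums
  have hSb_gen : ∀ a : ZMod p, a ≠ 0 → a ≠ 1 →
      (∑ b : ZMod p, ∑ c : ZMod p, Fcnt p a b c) = p * (p * (p - 1)) := by
    intro a ha0 ha1
    rw [Finset.sum_congr rfl (fun b _ => hSc_gen a b ha0 ha1), Finset.sum_const,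
      smul_eq_mul, hcard_univ]
  have hSb_1 : (∑ b : ZMod p, ∑ c : ZMod p, Fcnt p 1 b c)
      = (p - 1) * ((p - 1) * ((p - 1) * p) + (p - 2) * p) + p * ((p - 2) * p) := by
    rw [← Finset.sum_erase_add _ _ (Finset.mem_univ (0 : ZMod p)), hSc_10,
      Finset.sum_congr rfl (fun b hb2 => hSc_1b b (Finset.mem_erase.mp hb2).1),
      Finset.sum_const, smul_eq_mul, hcard_erase0]
  have hSb_0 : (∑ b : ZMod p, ∑ c : ZMod p, Fcnt p 0 b c) = 0 := by
    rw [Finset.sum_congr rfl (fun b _ => hSc_0 b), Finset.sum_const, smul_eq_mul,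
      mul_zero]
  -- a-sum
  rw [← Finset.sum_erase_add _ _ (Finset.mem_univ (0 : ZMod p)), hSb_0, add_zero,
    ← Finset.sum_erase_add _ _ hmem1, hSb_1]
  congr 1
  rw [Finset.sum_congr rfl (fun a ha => hSb_gen a (Finset.mem_erase.mp
      (Finset.mem_erase.mp ha).2).1 (Finset.mem_erase.mp ha).1),
    Finset.sum_const, smul_eq_mul, hcard_erase01]

variable (p) in
lemma count_final :
    Nat.card {q : Q p // Cond' p q.1 q.2.1 q.2.2.1 q.2.2.2} =
      p * (2 * p ^ 3 - 4 * p ^ 2 + 1) := by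
  rw [count_eq]
  obtain ⟨k, hk⟩ : ∃ k, p = k + 2 := ⟨p - 2, by have := hp.out.two_le; omega⟩
  have h1 : p - 1 = k + 1 := by omega
  have h2 : p - 2 = k := by omega
  have hsub : 2 * p ^ 3 - 4 * p ^ 2 = 2 * k * (k + 2) ^ 2 := by
    apply Nat.sub_eq_of_eq_add
    rw [hk]; ring
  rw [hsub, h1, h2, hk]
  ring

end ThetaAux

/-- For a prime `p` and `G = ℤ/p ⊕ ℤ/p²`, the number of automorphisms of `G`
with exactly `p` fixed points is `p(2p³ - 4p² + 1)`. -/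
theorem theta_p_of_zmod_p_zmod_p_sq (p : ℕ) (hp : p.Prime) :
    Nat.card {f : AddAut (ZMod p × ZMod (p ^ 2)) //
      Nat.card {g : ZMod p × ZMod (p ^ 2) // f g = g} = p} =
    p * (2 * p ^ 3 - 4 * p ^ 2 + 1) := by
  haveI := Fact.mk hp
  rw [ThetaAux.main_reduction p, ThetaAux.count_final p]
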